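/- Let (W,S) be a Coxeter system with S finite. Then every element w of the center Z(W) satisfies w² = 1. -/
import Mathlib

open CoxeterSystem List

section CoxHelper

variable {B : Type*} {W : Type*} [Group W] {M : CoxeterMatrix B} (cs : CoxeterSystem M W)

local prefix:100 "s" => cs.simple
local prefix:100 "π" => cs.wordProd
local prefix:100 "ℓ" => cs.length

noncomputable local instance : DecidableEq W := Classical.decEq W

/-- The twisted conjugation map on `W × ZMod 2`. -/
noncomputable def coxSigmaFun (i : B) : W × ZMod 2 → W × ZMod 2 :=
  fun p => (s i * p.1 * s i, p.2 + if p.1 = s i then 1 else 0)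

lemma coxSigmaFun_involutive (i : B) : Function.Involutive (coxSigmaFun cs i) := by
  rintro ⟨t, e⟩
  simp only [coxSigmaFun]
  refine Prod.ext ?_ ?_
  · simp [mul_assoc, cs.simple_mul_simple_self]
  · have h : (s i * t * s i = s i) ↔ t = s i := by
      constructor
      · intro h
        have := congrArg (fun x => s i * x * s i) h
        simpa [mul_assoc, cs.simple_mul_simple_self] using this
      · rintro rfl; simp [cs.simple_mul_simple_self]
    simp only [h]
    by_cases ht : t = s i <;> simp [ht, CharTwo.add_self_eq_zero, add_assoc]

/-- The twisted conjugation permutation. -/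
noncomputable def coxSigma (i : B) : Equiv.Perm (W × ZMod 2) :=
  Function.Involutive.toPerm _ (coxSigmaFun_involutive cs i)

lemma coxSigma_apply (i : B) (t : W) (e : ZMod 2) :
    coxSigma cs i (t, e) = (s i * t * s i, e + if t = s i then 1 else 0) := rfl

lemma cox_conj_pow (i j : B) (n : ℕ) :
    s j * (s i * s j) ^ n = ((s i * s j)⁻¹) ^ n * s j := by
  induction n with
  | zero => simp
  | succ n ih =>
      have hbr : s j * (s i * s j) = (s i * s j)⁻¹ * s j := by
        rw [mul_inv_rev, cs.inv_simple, cs.inv_simple]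
        group
      rw [pow_succ, ← mul_assoc, ih, mul_assoc, hbr, ← mul_assoc, ← pow_succ]

lemma coxSigma_pow_apply (i j : B) (k : ℕ) (t : W) (e : ZMod 2) :
    ((coxSigma cs i * coxSigma cs j) ^ k) (t, e) =
      ((s i * s j) ^ k * t * ((s i * s j)⁻¹) ^ k,
        e + ∑ n ∈ Finset.range (2 * k),
          if t = ((s i * s j)⁻¹) ^ n * s j then 1 else 0) := by
  set r := s i * s j with hr
  have key : ∀ (x u : W) (m : ℕ), (r ^ m * x * (r⁻¹) ^ m = u) ↔ (x = (r⁻¹) ^ m * u * r ^ m) := by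
    intro x u m
    constructor
    · intro h; rw [← h]; group
    · intro h; rw [h]; group
  induction k with
  | zero => simp
  | succ k ih =>
      rw [pow_succ', Equiv.Perm.mul_apply, ih, Equiv.Perm.mul_apply,
        coxSigma_apply, coxSigma_apply]
      have hrinv : r⁻¹ = s j * s i := by rw [hr, mul_inv_rev, cs.inv_simple, cs.inv_simple]
      have hc : ∀ m : ℕ, s j * r ^ m = r⁻¹ ^ m * s j := by
        intro m; rw [hr]; exact cox_conj_pow cs i j m
      refine Prod.ext ?_ ?_
      · show s i * (s j * (r ^ k * t * (r⁻¹) ^ k) * s j) * s i = r ^ (k+1) * t * (r⁻¹) ^ (k+1)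
        rw [pow_succ', pow_succ, hrinv, hr]
        group
      · show (e + ∑ n ∈ Finset.range (2 * k), if t = (r⁻¹) ^ n * s j then 1 else 0)
            + (if r ^ k * t * (r⁻¹) ^ k = s j then 1 else 0)
            + (if s j * (r ^ k * t * (r⁻¹) ^ k) * s j = s i then 1 else 0)
          = e + ∑ n ∈ Finset.range (2 * (k + 1)), if t = (r⁻¹) ^ n * s j then 1 else 0
        have c1 : (r ^ k * t * (r⁻¹) ^ k = s j) ↔ (t = (r⁻¹) ^ (2 * k) * s j) := by
          rw [key]
          have : (r⁻¹) ^ k * s j * r ^ k = (r⁻¹) ^ (2 * k) * s j := by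
            rw [mul_assoc, hc k, ← mul_assoc, ← pow_add, two_mul]
          rw [this]
        have c2 : (s j * (r ^ k * t * (r⁻¹) ^ k) * s j = s i) ↔
            (t = (r⁻¹) ^ (2 * k + 1) * s j) := by
          have hb : ∀ x : W, (s j * x * s j = s i) ↔ (x = s j * s i * s j) := by
            intro x
            constructor
            · intro h
              have := congrArg (fun y => s j * y * s j) h
              simpa [mul_assoc, cs.simple_mul_simple_self] using this
            · rintro rfl
              simp [mul_assoc, cs.simple_mul_simple_self]
          rw [hb, key]
          have h1 : s j * s i * s j = r⁻¹ * s j := by rw [hrinv]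
          have h2 : (r⁻¹) ^ k * (r⁻¹ * s j) * r ^ k = (r⁻¹) ^ (2 * k + 1) * s j := by
            have e1 : (r⁻¹) ^ k * (r⁻¹ * s j) * r ^ k = (r⁻¹) ^ (k + 1) * (s j * r ^ k) := by
              rw [pow_succ]; group
            rw [e1, hc k, ← mul_assoc, ← pow_add, show k + 1 + k = 2 * k + 1 by omega]
          rw [h1, h2]
        simp only [c1, c2]
        rw [show 2 * (k + 1) = (2 * k) + 1 + 1 by omega, Finset.sum_range_succ,
          Finset.sum_range_succ]
        ring

lemma coxSigma_liftable : M.IsLiftable (coxSigma cs) := by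
  intro i j
  apply Equiv.ext
  rintro ⟨t, e⟩
  rw [coxSigma_pow_apply]
  have h1 : (s i * s j) ^ M i j = 1 := cs.simple_mul_simple_pow i j
  have h2 : ((s i * s j)⁻¹) ^ M i j = 1 := by rw [inv_pow, h1, inv_one]
  have hsum : ∑ n ∈ Finset.range (2 * M i j),
      (if t = ((s i * s j)⁻¹) ^ n * s j then (1 : ZMod 2) else 0) = 0 := by
    rw [two_mul, Finset.sum_range_add]
    have : ∀ n, ((s i * s j)⁻¹) ^ (M i j + n) = ((s i * s j)⁻¹) ^ n := by
      intro n; rw [pow_add, h2, one_mul]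
    simp only [this]
    exact CharTwo.add_self_eq_zero _
  rw [h1, hsum]
  simp

/-- The reflection representation homomorphism. -/
noncomputable def coxPhi : W →* Equiv.Perm (W × ZMod 2) :=
  cs.lift ⟨coxSigma cs, coxSigma_liftable cs⟩

lemma coxPhi_simple (i : B) : coxPhi cs (s i) = coxSigma cs i :=
  cs.lift_apply_simple (coxSigma_liftable cs) i

lemma coxPhi_wordProd (ω : List B) (t : W) (e : ZMod 2) :
    coxPhi cs (π ω) (t, e) =
      (π ω * t * (π ω)⁻¹, e + ((cs.rightInvSeq ω).count t : ZMod 2)) := by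
  induction ω generalizing e with
  | nil => simp
  | cons i ω ih =>
      rw [cs.wordProd_cons, map_mul, Equiv.Perm.mul_apply, ih, coxPhi_simple, coxSigma_apply]
      refine Prod.ext ?_ ?_
      · show s i * (π ω * t * (π ω)⁻¹) * s i = (s i * π ω) * t * (s i * π ω)⁻¹
        rw [mul_inv_rev, cs.inv_simple]
        group
      · show e + ((cs.rightInvSeq ω).count t : ZMod 2)
            + (if π ω * t * (π ω)⁻¹ = s i then 1 else 0)
          = e + ((cs.rightInvSeq (i :: ω)).count t : ZMod 2)
        have hconj : (π ω * t * (π ω)⁻¹ = s i) ↔ (t = (π ω)⁻¹ * s i * π ω) := by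
          constructor
          · intro h; rw [← h]; group
          · intro h; rw [h]; group
        have : cs.rightInvSeq (i :: ω) = ((π ω)⁻¹ * s i * π ω) :: cs.rightInvSeq ω := rfl
        rw [this, List.count_cons]
        push_cast
        simp only [hconj, beq_iff_eq]
        by_cases hcase : t = (π ω)⁻¹ * s i * π ω
        · rw [if_pos hcase, if_pos hcase.symm, add_assoc]
        · rw [if_neg hcase, if_neg (fun h => hcase h.symm), add_assoc]

/-- The inversion-parity function. -/
noncomputable def coxEta (w t : W) : ZMod 2 := (coxPhi cs w (t, 0)).2

lemma coxEta_eq_count (ω : List B) (t : W) :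
    coxEta cs (π ω) t = ((cs.rightInvSeq ω).count t : ZMod 2) := by
  rw [coxEta, coxPhi_wordProd, zero_add]

lemma coxPhi_apply (w t : W) (e : ZMod 2) :
    coxPhi cs w (t, e) = (w * t * w⁻¹, e + coxEta cs w t) := by
  obtain ⟨ω, rfl⟩ := cs.wordProd_surjective w
  rw [coxPhi_wordProd, coxEta_eq_count]

lemma coxEta_mul (u v t : W) :
    coxEta cs (u * v) t = coxEta cs v t + coxEta cs u (v * t * v⁻¹) := by
  have h1 : coxPhi cs (u * v) (t, 0) = ((u * v) * t * (u * v)⁻¹, 0 + coxEta cs (u * v) t) :=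
    coxPhi_apply cs (u * v) t 0
  rw [map_mul, Equiv.Perm.mul_apply, coxPhi_apply cs v t 0,
    coxPhi_apply cs u (v * t * v⁻¹) (0 + coxEta cs v t)] at h1
  have h2 := congrArg Prod.snd h1
  simpa using h2.symm

lemma coxEta_simple (i : B) (t : W) :
    coxEta cs (s i) t = if t = s i then 1 else 0 := by
  rw [coxEta, coxPhi_simple, coxSigma_apply, zero_add]

lemma coxEta_mul_simple (w : W) (i : B) (t : W) :
    coxEta cs (w * s i) t = (if t = s i then 1 else 0) + coxEta cs w (s i * t * s i) := by
  rw [coxEta_mul, coxEta_simple, cs.inv_simple]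

lemma isRightInversion_of_coxEta_eq_one {w t : W} (h : coxEta cs w t = 1) :
    cs.IsRightInversion w t := by
  obtain ⟨ω, hred, rfl⟩ := cs.exists_reduced_word' w
  rw [coxEta_eq_count] at h
  have hne : (cs.rightInvSeq ω).count t ≠ 0 := by
    intro h0
    rw [h0] at h
    simp at h
  exact cs.isRightInversion_of_mem_rightInvSeq hred (List.count_pos_iff.mp (Nat.pos_of_ne_zero hne))

lemma coxEta_conj_self (ω : List B) (i : B) :
    coxEta cs (π ω * s i * (π ω)⁻¹) (π ω * s i * (π ω)⁻¹) = 1 := by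
  induction ω with
  | nil => simp [coxEta_simple]
  | cons j ω ih =>
      have hw : π (j :: ω) * s i * (π (j :: ω))⁻¹
          = s j * (π ω * s i * (π ω)⁻¹) * s j := by
        rw [cs.wordProd_cons, mul_inv_rev, cs.inv_simple]
        group
      rw [hw]
      revert ih
      generalize π ω * s i * (π ω)⁻¹ = t'
      intro ih
      have harg : s j * (s j * t' * s j) * s j = t' := by
        simp [mul_assoc, cs.simple_mul_simple_self]
      have step2 : coxEta cs (s j * t') t' = coxEta cs t' t' + (if t' = s j then 1 else 0) := by
        rw [coxEta_mul]
        have htt : t' * t' * t'⁻¹ = t' := by group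
        rw [htt, coxEta_simple]
      rw [coxEta_mul_simple, harg, step2, ih]
      have hiff : (s j * t' * s j = s j) ↔ (t' = s j) := by
        constructor
        · intro h
          have := congrArg (fun y => s j * y * s j) h
          simpa [mul_assoc, cs.simple_mul_simple_self] using this
        · rintro rfl
          simp [mul_assoc, cs.simple_mul_simple_self]
      simp only [hiff]
      by_cases h : t' = s j
      · simp only [if_pos h]; decide
      · simp only [if_neg h]; decide

lemma coxEta_refl_self {t : W} (ht : cs.IsReflection t) : coxEta cs t t = 1 := by
  obtain ⟨u, i, rfl⟩ := ht
  obtain ⟨ω, rfl⟩ := cs.wordProd_surjective u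
  exact coxEta_conj_self cs ω i

lemma coxEta_eq_one_iff {w t : W} (ht : cs.IsReflection t) :
    coxEta cs w t = 1 ↔ cs.IsRightInversion w t := by
  constructor
  · exact isRightInversion_of_coxEta_eq_one cs
  · intro hinv
    by_contra h0
    have h0' : coxEta cs w t = 0 := by
      revert h0; generalize coxEta cs w t = x; revert x; decide
    have he : coxEta cs (w * t) t = 1 := by
      rw [coxEta_mul]
      have : t * t * t⁻¹ = t := by group
      rw [this, coxEta_refl_self cs ht, h0']
      decide
    have hinv2 := isRightInversion_of_coxEta_eq_one cs he
    have h1 := hinv.2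
    have h2 := hinv2.2
    rw [mul_assoc, ht.mul_self, mul_one] at h2
    omega

lemma coxEta_eq_zero_iff {w t : W} (ht : cs.IsReflection t) :
    coxEta cs w t = 0 ↔ ¬ cs.IsRightInversion w t := by
  rw [← coxEta_eq_one_iff cs ht]
  generalize coxEta cs w t = x
  revert x; decide

/-- Transfer of inversion sets across a right descent. -/
lemma isRightInversion_mul_simple_iff {w : W} {i : B} (hd : cs.IsRightDescent w i)
    {t : W} (ht : cs.IsReflection t) :
    cs.IsRightInversion (w * s i) t ↔
      (t ≠ s i ∧ cs.IsRightInversion w (s i * t * s i)) := by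
  have htc : cs.IsReflection (s i * t * s i) := by
    have := ht.conj (s i)
    rwa [cs.inv_simple] at this
  rw [← coxEta_eq_one_iff cs ht, coxEta_mul_simple]
  by_cases hts : t = s i
  · subst hts
    simp only [if_pos rfl, ne_eq, not_true_eq_false, false_and, iff_false]
    have : s i * s i * s i = s i := by simp [mul_assoc, cs.simple_mul_simple_self]
    rw [this]
    have hone : coxEta cs w (s i) = 1 := by
      rw [coxEta_eq_one_iff cs (cs.isReflection_simple i),
        cs.isRightInversion_simple_iff_isRightDescent]
      exact hd
    rw [hone]
    decide
  · have hand : (t ≠ s i ∧ cs.IsRightInversion w (s i * t * s i)) ↔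
        cs.IsRightInversion w (s i * t * s i) := and_iff_right hts
    rw [if_neg hts, zero_add, hand]
    exact coxEta_eq_one_iff cs htc

lemma eq_of_forall_isRightInversion_iff (u v : W)
    (h : ∀ t, cs.IsReflection t → (cs.IsRightInversion u t ↔ cs.IsRightInversion v t)) :
    u = v := by
  have main : ∀ n (u v : W), ℓ u = n →
      (∀ t, cs.IsReflection t → (cs.IsRightInversion u t ↔ cs.IsRightInversion v t)) →
      u = v := by
    intro n
    induction n using Nat.strong_induction_on with
    | _ n ih =>
      intro u v hn h
      by_cases hu : u = 1
      · subst hu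
        by_contra hv
        obtain ⟨i, hdesc⟩ := cs.exists_rightDescent_of_ne_one fun hv1 => hv (hv1.symm)
        have h1 : cs.IsRightInversion (1 : W) (s i) := by
          rw [h _ (cs.isReflection_simple i), cs.isRightInversion_simple_iff_isRightDescent]
          exact hdesc
        have := h1.2
        simp at this
      · obtain ⟨i, hdesc⟩ := cs.exists_rightDescent_of_ne_one hu
        have hdv : cs.IsRightDescent v i := by
          rw [← cs.isRightInversion_simple_iff_isRightDescent,
            ← h _ (cs.isReflection_simple i),
            cs.isRightInversion_simple_iff_isRightDescent]
          exact hdesc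
        have h' : ∀ t, cs.IsReflection t →
            (cs.IsRightInversion (u * s i) t ↔ cs.IsRightInversion (v * s i) t) := by
          intro t ht
          rw [isRightInversion_mul_simple_iff cs hdesc ht,
            isRightInversion_mul_simple_iff cs hdv ht]
          have htc : cs.IsReflection (s i * t * s i) := by
            have := ht.conj (s i); rwa [cs.inv_simple] at this
          rw [h _ htc]
        have hlt : ℓ (u * s i) < n := hn ▸ hdesc
        have heq := ih _ hlt (u * s i) (v * s i) rfl h'
        have := congrArg (fun x => x * s i) heq
        simpa [mul_assoc, cs.simple_mul_simple_self] using this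
  exact main (ℓ u) u v rfl h

end CoxHelper

/-- **Theorem (Hosaka).** Let `(W, S)` be a Coxeter system with `S` finite. Then every
element `w` of the center `Z(W)` satisfies `w² = 1`. -/
theorem sq_eq_one_of_mem_center_of_coxeter_group {B : Type*} [Finite B] {W : Type*} [Group W]
    (M : CoxeterMatrix B) (cs : CoxeterSystem M W) :
    ∀ w ∈ Subgroup.center W, w ^ 2 = 1 := by
  intro w hw
  have hcomm : ∀ g : W, g * w = w * g := fun g => (Subgroup.mem_center_iff.mp hw) g
  have hinv : w = w⁻¹ := by
    apply eq_of_forall_isRightInversion_iff cs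
    intro t ht
    unfold CoxeterSystem.IsRightInversion
    have hlen : cs.length (w * t) = cs.length (w⁻¹ * t) := by
      have h1 : w⁻¹ * t = (t⁻¹ * w)⁻¹ := by group
      rw [h1, cs.length_inv, ht.inv, hcomm t]
    rw [hlen, cs.length_inv]
  rw [pow_two]
  nth_rewrite 2 [hinv]
  exact mul_inv_cancel w
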